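/- The integral over the real line of [(1 - αz - βz³)² + 1]·φ(z)·Φ(λz) dz equals 1 + 3αβ - αbδ - βbδ(3+2λ²)/(1+λ²) + α²/2 + 15β²/2, where φ and Φ are the standard normal pdf and cdf, b = √(2/π), and δ = λ/√(1+λ²). -/

import Mathlib

open Real MeasureTheory Filter

/-- standard normal pdf -/
noncomputable def phi (z : ℝ) : ℝ := (Real.sqrt (2 * Real.pi))⁻¹ * Real.exp (-z ^ 2 / 2)

/-- standard normal cdf -/
noncomputable def Phi (z : ℝ) : ℝ := ∫ t in Set.Iic z, phi t

noncomputable def bconst : ℝ := Real.sqrt (2 / Real.pi)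

noncomputable def del (l : ℝ) : ℝ := l / Real.sqrt (1 + l ^ 2)

/-- GABSN normalizing constant -/
noncomputable def C (a β l : ℝ) : ℝ :=
  1 + 3 * a * β - a * bconst * del l - β * bconst * del l * (3 + 2 * l ^ 2) / (1 + l ^ 2)
    + a ^ 2 / 2 + 15 * β ^ 2 / 2

/-- GABSN density -/
noncomputable def f (a β l z : ℝ) : ℝ :=
  (((1 - a * z - β * z ^ 3) ^ 2 + 1) * phi z * Phi (l * z)) / C a β l

/-! ### Auxiliary lemmas -/

lemma phi_def (z : ℝ) : phi z = (Real.sqrt (2 * π))⁻¹ * Real.exp (-(1/2) * z ^ 2) := by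
  unfold phi; ring_nf

lemma phi_pos (z : ℝ) : 0 < phi z := by
  rw [phi_def]
  have : 0 < Real.sqrt (2 * π) := Real.sqrt_pos.2 (by positivity)
  positivity

lemma phi_neg_eq (z : ℝ) : phi (-z) = phi z := by simp [phi_def]

lemma continuous_phi : Continuous phi := by
  unfold phi; fun_prop

lemma integrable_pow_gauss {c : ℝ} (hc : 0 < c) (n : ℕ) :
    Integrable fun z : ℝ => z ^ n * Real.exp (-c * z ^ 2) := by
  have h := integrable_rpow_mul_exp_neg_mul_sq hc (s := (n : ℝ))
    (lt_of_lt_of_le (by norm_num) (Nat.cast_nonneg n))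
  simpa [Real.rpow_natCast] using h

lemma integrable_abs_pow_gauss {c : ℝ} (hc : 0 < c) (n : ℕ) :
    Integrable fun z : ℝ => |z| ^ n * Real.exp (-c * z ^ 2) := by
  have h := (integrable_pow_gauss hc n).abs
  simpa [abs_mul, abs_pow, abs_of_pos (Real.exp_pos _)] using h

lemma integrable_pow_phi (n : ℕ) : Integrable fun z : ℝ => z ^ n * phi z := by
  have h := (integrable_pow_gauss (by norm_num : (0:ℝ) < 1/2) n).const_mul
    ((Real.sqrt (2 * π))⁻¹)
  have e : (fun z : ℝ => z ^ n * phi z)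
      = fun z : ℝ => (Real.sqrt (2 * π))⁻¹ * (z ^ n * Real.exp (-(1/2) * z ^ 2)) := by
    funext z; rw [phi_def]; ring
  rw [e]
  exact h

lemma integrable_abs_pow_phi (n : ℕ) : Integrable fun z : ℝ => |z| ^ n * phi z := by
  have h := (integrable_pow_phi n).abs
  simpa [abs_mul, abs_pow, abs_of_pos (phi_pos _)] using h

lemma integrable_phi : Integrable phi := by
  have h := integrable_pow_phi 0
  simpa using h

/-- Recursion for Gaussian moments. -/
lemma gauss_rec {c : ℝ} (hc : 0 < c) (n : ℕ) :
    ∫ z : ℝ, z ^ (n + 2) * Real.exp (-c * z ^ 2)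
      = ((n + 1 : ℝ) / (2 * c)) * ∫ z : ℝ, z ^ n * Real.exp (-c * z ^ 2) := by
  have hderiv : ∀ x : ℝ, HasDerivAt (fun z : ℝ => z ^ (n + 1) * Real.exp (-c * z ^ 2))
      ((n + 1 : ℝ) * (x ^ n * Real.exp (-c * x ^ 2))
        - (2 * c) * (x ^ (n + 2) * Real.exp (-c * x ^ 2))) x := by
    intro x
    have h1 : HasDerivAt (fun z : ℝ => z ^ (n + 1)) ((n + 1 : ℝ) * x ^ n) x := by
      simpa using hasDerivAt_pow (n + 1) x
    have h2 : HasDerivAt (fun z : ℝ => Real.exp (-c * z ^ 2))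
        (Real.exp (-c * x ^ 2) * (-c * (2 * x))) x := by
      have h3 : HasDerivAt (fun z : ℝ => -c * z ^ 2) (-c * (2 * x)) x := by
        simpa using (hasDerivAt_pow 2 x).const_mul (-c)
      exact h3.exp
    have h := h1.mul h2
    refine h.congr_deriv ?_
    ring
  have hin := integrable_pow_gauss hc n
  have hin1 := integrable_pow_gauss hc (n + 1)
  have hin2 := integrable_pow_gauss hc (n + 2)
  have h0 := integral_eq_zero_of_hasDerivAt_of_integrable hderiv
    ((hin.const_mul _).sub (hin2.const_mul _)) hin1
  rw [integral_sub (hin.const_mul _) (hin2.const_mul _), integral_const_mul,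
    integral_const_mul] at h0
  have h2c : (2 * c) ≠ 0 := by positivity
  rw [div_mul_eq_mul_div, eq_div_iff h2c]
  linarith [h0]

lemma gauss_m0 {c : ℝ} (hc : 0 < c) :
    ∫ z : ℝ, Real.exp (-c * z ^ 2) = Real.sqrt (π / c) := integral_gaussian c

lemma gauss_m0' {c : ℝ} (hc : 0 < c) :
    ∫ z : ℝ, z ^ 0 * Real.exp (-c * z ^ 2) = Real.sqrt (π / c) := by
  simpa using gauss_m0 hc

lemma gauss_m2 {c : ℝ} (hc : 0 < c) :
    ∫ z : ℝ, z ^ 2 * Real.exp (-c * z ^ 2) = 1 / (2 * c) * Real.sqrt (π / c) := by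
  have h := gauss_rec hc 0
  rw [gauss_m0' hc] at h
  simpa using h

/-! ### Moments of phi -/

lemma pow_phi_integral (n : ℕ) :
    ∫ z : ℝ, z ^ n * phi z
      = (Real.sqrt (2 * π))⁻¹ * ∫ z : ℝ, z ^ n * Real.exp (-(1/2) * z ^ 2) := by
  rw [← integral_const_mul]
  congr 1
  funext z
  rw [phi_def]; ring

lemma sqrt_two_pi_pos : 0 < Real.sqrt (2 * π) := Real.sqrt_pos.2 (by positivity)

lemma gauss_half_m0 : ∫ z : ℝ, z ^ 0 * Real.exp (-(1/2) * z ^ 2) = Real.sqrt (2 * π) := by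
  rw [gauss_m0' (by norm_num : (0:ℝ) < 1/2)]
  congr 1
  ring

lemma gauss_half_m2 : ∫ z : ℝ, z ^ 2 * Real.exp (-(1/2) * z ^ 2) = Real.sqrt (2 * π) := by
  have h := gauss_rec (by norm_num : (0:ℝ) < 1/2) 0
  rw [gauss_half_m0] at h
  rw [h]; ring

lemma gauss_half_m4 : ∫ z : ℝ, z ^ 4 * Real.exp (-(1/2) * z ^ 2) = 3 * Real.sqrt (2 * π) := by
  have h := gauss_rec (by norm_num : (0:ℝ) < 1/2) 2
  rw [gauss_half_m2] at h
  rw [h]; push_cast; ring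

lemma gauss_half_m6 : ∫ z : ℝ, z ^ 6 * Real.exp (-(1/2) * z ^ 2) = 15 * Real.sqrt (2 * π) := by
  have h := gauss_rec (by norm_num : (0:ℝ) < 1/2) 4
  rw [gauss_half_m4] at h
  rw [h]; push_cast; ring

lemma M0 : ∫ z : ℝ, z ^ 0 * phi z = 1 := by
  rw [pow_phi_integral, gauss_half_m0, inv_mul_cancel₀ (ne_of_gt sqrt_two_pi_pos)]

lemma M2 : ∫ z : ℝ, z ^ 2 * phi z = 1 := by
  rw [pow_phi_integral, gauss_half_m2, inv_mul_cancel₀ (ne_of_gt sqrt_two_pi_pos)]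

lemma M4 : ∫ z : ℝ, z ^ 4 * phi z = 3 := by
  rw [pow_phi_integral, gauss_half_m4, mul_comm (3:ℝ), ← mul_assoc,
    inv_mul_cancel₀ (ne_of_gt sqrt_two_pi_pos), one_mul]

lemma M6 : ∫ z : ℝ, z ^ 6 * phi z = 15 := by
  rw [pow_phi_integral, gauss_half_m6, mul_comm (15:ℝ), ← mul_assoc,
    inv_mul_cancel₀ (ne_of_gt sqrt_two_pi_pos), one_mul]

lemma integral_phi : ∫ z : ℝ, phi z = 1 := by
  have := M0; simpa using this

/-! ### Properties of Phi -/

lemma Phi_nonneg (x : ℝ) : 0 ≤ Phi x :=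
  setIntegral_nonneg measurableSet_Iic fun z _ => (phi_pos z).le

lemma Phi_le_one (x : ℝ) : Phi x ≤ 1 := by
  rw [← integral_phi]
  exact setIntegral_le_integral integrable_phi (Eventually.of_forall fun z => (phi_pos z).le)

lemma abs_Phi_le_one (x : ℝ) : |Phi x| ≤ 1 :=
  abs_le.2 ⟨by linarith [Phi_nonneg x], Phi_le_one x⟩

lemma Phi_neg (x : ℝ) : Phi (-x) = 1 - Phi x := by
  have hsplit : (∫ z in Set.Iic x, phi z) + ∫ z in Set.Ioi x, phi z = ∫ z : ℝ, phi z :=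
    intervalIntegral.integral_Iic_add_Ioi integrable_phi.integrableOn
      integrable_phi.integrableOn
  have hcomp : (∫ z in Set.Iic (-x), phi z) = ∫ z in Set.Ioi x, phi z := by
    calc (∫ z in Set.Iic (-x), phi z) = ∫ z in Set.Iic (-x), phi (-z) :=
          integral_congr_ae (Eventually.of_forall fun z => (phi_neg_eq z).symm)
      _ = ∫ z in Set.Ioi (-(-x)), phi z := integral_comp_neg_Iic (-x) phi
      _ = ∫ z in Set.Ioi x, phi z := by rw [neg_neg]
  rw [Phi, Phi, hcomp]
  rw [integral_phi] at hsplit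
  linarith

lemma hasDerivAt_Phi (x : ℝ) : HasDerivAt Phi (phi x) x := by
  have key : ∀ y : ℝ, Phi y = Phi 0 + ∫ t in (0:ℝ)..y, phi t := by
    intro y
    have := intervalIntegral.integral_Iic_sub_Iic integrable_phi.integrableOn integrable_phi.integrableOn
      (a := 0) (b := y)
    rw [Phi, Phi]
    linarith [this]
  have h : HasDerivAt (fun y => Phi 0 + ∫ t in (0:ℝ)..y, phi t) (phi x) x := by
    apply HasDerivAt.const_add
    exact intervalIntegral.integral_hasDerivAt_right
      integrable_phi.intervalIntegrable
      (continuous_phi.stronglyMeasurableAtFilter _ _)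
      continuous_phi.continuousAt
  have : Phi = fun y => Phi 0 + ∫ t in (0:ℝ)..y, phi t := funext key
  rw [this]
  exact h

lemma continuous_Phi : Continuous Phi :=
  continuous_iff_continuousAt.2 fun x => (hasDerivAt_Phi x).continuousAt

lemma hasDerivAt_phi (x : ℝ) : HasDerivAt phi (-x * phi x) x := by
  have h1 : HasDerivAt (fun z : ℝ => -(1/2) * z ^ 2) (-x) x := by
    have := (hasDerivAt_pow 2 x).const_mul (-(1/2) : ℝ)
    refine this.congr_deriv ?_
    push_cast; ring
  have h2 := (h1.exp.const_mul ((Real.sqrt (2 * π))⁻¹))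
  have : phi = fun z => (Real.sqrt (2 * π))⁻¹ * Real.exp (-(1/2) * z ^ 2) := funext phi_def
  have h2' : HasDerivAt phi ((Real.sqrt (2 * π))⁻¹ * (Real.exp (-(1/2) * x ^ 2) * -x)) x := by
    rw [this]; exact h2
  convert h2' using 1
  rw [phi_def]; ring

/-! ### Integrability lemmas -/

lemma integrable_term (l : ℝ) (n : ℕ) :
    Integrable fun z : ℝ => z ^ n * phi z * Phi (l * z) := by
  apply Integrable.mono' (integrable_abs_pow_phi n)
  · exact ((continuous_pow n).mul continuous_phi |>.mul
      (continuous_Phi.comp (continuous_const.mul continuous_id))).aestronglyMeasurable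
  · filter_upwards with z
    rw [Real.norm_eq_abs, abs_mul, abs_mul, abs_pow]
    calc |z| ^ n * |phi z| * |Phi (l * z)| ≤ |z| ^ n * |phi z| * 1 := by
          apply mul_le_mul_of_nonneg_left (abs_Phi_le_one _) (by positivity)
      _ = |z| ^ n * phi z := by rw [mul_one, abs_of_pos (phi_pos z)]

lemma phi_mul_phi (l z : ℝ) :
    phi z * phi (l * z) = (2 * π)⁻¹ * Real.exp (-((1 + l ^ 2)/2) * z ^ 2) := by
  rw [phi_def, phi_def]
  rw [show (Real.sqrt (2*π))⁻¹ * Real.exp (-(1/2) * z^2) *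
      ((Real.sqrt (2*π))⁻¹ * Real.exp (-(1/2) * (l*z)^2))
      = ((Real.sqrt (2*π)) * (Real.sqrt (2*π)))⁻¹ *
        (Real.exp (-(1/2) * z^2) * Real.exp (-(1/2) * (l*z)^2)) by
    rw [mul_inv]; ring]
  rw [Real.mul_self_sqrt (by positivity), ← Real.exp_add]
  congr 1
  ring

lemma integrable_phi_phi (l : ℝ) : Integrable fun z : ℝ => phi z * phi (l * z) := by
  simp_rw [phi_mul_phi]
  exact (integrable_exp_neg_mul_sq (by positivity)).const_mul _

lemma integrable_pow_phi_phi (l : ℝ) (n : ℕ) :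
    Integrable fun z : ℝ => z ^ n * (phi z * phi (l * z)) := by
  have e : (fun z : ℝ => z ^ n * (phi z * phi (l * z)))
      = fun z : ℝ => (2 * π)⁻¹ * (z ^ n * Real.exp (-((1 + l ^ 2)/2) * z ^ 2)) := by
    funext z; rw [phi_mul_phi]; ring
  rw [e]
  exact (integrable_pow_gauss (by positivity) n).const_mul _

/-! ### Even moments -/

lemma I_even (l : ℝ) {n : ℕ} (hn : Even n) :
    ∫ z : ℝ, z ^ n * phi z * Phi (l * z) = (∫ z : ℝ, z ^ n * phi z) / 2 := by
  have hflip : ∫ z : ℝ, z ^ n * phi z * Phi (l * z)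
      = ∫ z : ℝ, z ^ n * phi z * Phi (-(l * z)) := by
    rw [← integral_neg_eq_self (fun z : ℝ => z ^ n * phi z * Phi (l * z)) volume]
    congr 1
    funext z
    rw [hn.neg_pow, phi_neg_eq, mul_neg]
  have h1 := integrable_term l n
  have h2 : Integrable fun z : ℝ => z ^ n * phi z * Phi (-(l * z)) := by
    have := integrable_term (-l) n
    simpa [neg_mul] using this
  have hsum : (∫ z : ℝ, z ^ n * phi z * Phi (l * z))
      + ∫ z : ℝ, z ^ n * phi z * Phi (-(l * z)) = ∫ z : ℝ, z ^ n * phi z := by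
    rw [← integral_add h1 h2]
    congr 1
    funext z
    rw [Phi_neg]
    ring
  rw [← hflip] at hsum
  linarith

/-! ### Odd moments via integration by parts -/

lemma hasDerivAt_Phi_comp (l x : ℝ) :
    HasDerivAt (fun z : ℝ => Phi (l * z)) (l * phi (l * x)) x := by
  have h := (hasDerivAt_Phi (l * x)).comp x ((hasDerivAt_id x).const_mul l)
  exact h.congr_deriv (by ring)

lemma I1_eq (l : ℝ) :
    ∫ z : ℝ, z ^ 1 * phi z * Phi (l * z)
      = l * ∫ z : ℝ, phi z * phi (l * z) := by
  have hderiv : ∀ x : ℝ, HasDerivAt (fun z : ℝ => -(phi z * Phi (l * z)))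
      (x ^ 1 * phi x * Phi (l * x) - l * (phi x * phi (l * x))) x := by
    intro x
    have h := ((hasDerivAt_phi x).mul (hasDerivAt_Phi_comp l x)).neg
    refine h.congr_deriv ?_
    ring
  have hf' : Integrable fun x : ℝ => x ^ 1 * phi x * Phi (l * x) - l * (phi x * phi (l * x)) := by
    exact (integrable_term l 1).sub ((integrable_phi_phi l).const_mul l)
  have hf : Integrable fun x : ℝ => -(phi x * Phi (l * x)) := by
    apply Integrable.neg
    apply Integrable.mono' integrable_phi
    · exact (continuous_phi.mul
        (continuous_Phi.comp (continuous_const.mul continuous_id))).aestronglyMeasurable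
    · filter_upwards with z
      rw [Real.norm_eq_abs, abs_mul]
      calc |phi z| * |Phi (l * z)| ≤ |phi z| * 1 :=
            mul_le_mul_of_nonneg_left (abs_Phi_le_one _) (abs_nonneg _)
        _ = phi z := by rw [mul_one, abs_of_pos (phi_pos z)]
  have h0 := integral_eq_zero_of_hasDerivAt_of_integrable hderiv hf' hf
  rw [integral_sub (integrable_term l 1) ((integrable_phi_phi l).const_mul l),
    integral_const_mul] at h0
  linarith

lemma I3_eq (l : ℝ) :
    ∫ z : ℝ, z ^ 3 * phi z * Phi (l * z)
      = l * ∫ z : ℝ, (z ^ 2 + 2) * (phi z * phi (l * z)) := by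
  have hderiv : ∀ x : ℝ, HasDerivAt (fun z : ℝ => -((z ^ 2 + 2) * phi z * Phi (l * z)))
      (x ^ 3 * phi x * Phi (l * x) - l * ((x ^ 2 + 2) * (phi x * phi (l * x)))) x := by
    intro x
    have hp : HasDerivAt (fun z : ℝ => z ^ 2 + 2) (2 * x) x := by
      simpa using (hasDerivAt_pow 2 x).add_const 2
    have h := (((hp.mul (hasDerivAt_phi x))).mul (hasDerivAt_Phi_comp l x)).neg
    refine h.congr_deriv ?_
    simp only [Pi.mul_apply]
    ring
  have hint23 : Integrable fun z : ℝ => (z ^ 2 + 2) * (phi z * phi (l * z)) := by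
    have e : (fun z : ℝ => (z ^ 2 + 2) * (phi z * phi (l * z)))
        = fun z : ℝ => z ^ 2 * (phi z * phi (l * z)) + 2 * (phi z * phi (l * z)) := by
      funext z; ring
    rw [e]
    exact (integrable_pow_phi_phi l 2).add ((integrable_phi_phi l).const_mul 2)
  have hf' : Integrable fun x : ℝ =>
      x ^ 3 * phi x * Phi (l * x) - l * ((x ^ 2 + 2) * (phi x * phi (l * x))) :=
    (integrable_term l 3).sub (hint23.const_mul l)
  have hf : Integrable fun x : ℝ => -((x ^ 2 + 2) * phi x * Phi (l * x)) := by
    apply Integrable.neg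
    have hbnd : Integrable fun z : ℝ => |z| ^ 2 * phi z + 2 * phi z :=
      (integrable_abs_pow_phi 2).add (integrable_phi.const_mul 2)
    apply Integrable.mono' hbnd
    · exact (((continuous_pow 2).add continuous_const).mul continuous_phi |>.mul
        (continuous_Phi.comp (continuous_const.mul continuous_id))).aestronglyMeasurable
    · filter_upwards with z
      rw [Real.norm_eq_abs, abs_mul, abs_mul]
      have h1 : |z ^ 2 + 2| = z ^ 2 + 2 := abs_of_pos (by positivity)
      have h2 : |phi z| = phi z := abs_of_pos (phi_pos z)
      rw [h1, h2]
      calc (z ^ 2 + 2) * phi z * |Phi (l * z)| ≤ (z ^ 2 + 2) * phi z * 1 :=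
            mul_le_mul_of_nonneg_left (abs_Phi_le_one _)
              (mul_nonneg (by positivity) (phi_pos z).le)
        _ = |z| ^ 2 * phi z + 2 * phi z := by rw [mul_one, sq_abs]; ring
  have h0 := integral_eq_zero_of_hasDerivAt_of_integrable hderiv hf' hf
  rw [integral_sub (integrable_term l 3) (hint23.const_mul l), integral_const_mul] at h0
  linarith

/-! ### Evaluating the Gaussian product integrals -/

lemma sqrt_alg (l : ℝ) :
    (2 * π)⁻¹ * Real.sqrt (π / ((1 + l ^ 2) / 2)) = bconst / (2 * Real.sqrt (1 + l ^ 2)) := by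
  have h1 : (0:ℝ) < 1 + l ^ 2 := by positivity
  have hπ : (0:ℝ) < π := pi_pos
  have e1 : π / ((1 + l ^ 2) / 2) = 2 * π / (1 + l ^ 2) := by
    field_simp
  rw [e1, Real.sqrt_div (by positivity : (0:ℝ) ≤ 2 * π) _, bconst,
    Real.sqrt_div (by norm_num : (0:ℝ) ≤ 2) π, Real.sqrt_mul (by norm_num : (0:ℝ) ≤ 2) π]
  have h2 : (0:ℝ) < Real.sqrt 2 := Real.sqrt_pos.2 (by norm_num)
  have h3 : (0:ℝ) < Real.sqrt π := Real.sqrt_pos.2 hπ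
  have h4 : (0:ℝ) < Real.sqrt (1 + l ^ 2) := Real.sqrt_pos.2 h1
  have h6 : Real.sqrt π * Real.sqrt π = π := Real.mul_self_sqrt hπ.le
  field_simp
  linear_combination h6

lemma J0_eq (l : ℝ) :
    ∫ z : ℝ, phi z * phi (l * z) = bconst / (2 * Real.sqrt (1 + l ^ 2)) := by
  simp_rw [phi_mul_phi]
  rw [integral_const_mul, gauss_m0 (by positivity), sqrt_alg]

lemma J2_eq (l : ℝ) :
    ∫ z : ℝ, z ^ 2 * (phi z * phi (l * z))
      = (1 / (1 + l ^ 2)) * (bconst / (2 * Real.sqrt (1 + l ^ 2))) := by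
  have e : (fun z : ℝ => z ^ 2 * (phi z * phi (l * z)))
      = fun z : ℝ => (2 * π)⁻¹ * (z ^ 2 * Real.exp (-((1 + l ^ 2)/2) * z ^ 2)) := by
    funext z; rw [phi_mul_phi]; ring
  rw [e, integral_const_mul, gauss_m2 (by positivity)]
  rw [show (1:ℝ) / (2 * ((1 + l ^ 2) / 2)) = 1 / (1 + l ^ 2) by ring]
  rw [← sqrt_alg]
  ring

/-! ### The key moment values -/

lemma I0_val (l : ℝ) : ∫ z : ℝ, z ^ 0 * phi z * Phi (l * z) = 1 / 2 := by
  rw [I_even l (Even.zero), M0]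

lemma I2_val (l : ℝ) : ∫ z : ℝ, z ^ 2 * phi z * Phi (l * z) = 1 / 2 := by
  rw [I_even l (by decide), M2]

lemma I4_val (l : ℝ) : ∫ z : ℝ, z ^ 4 * phi z * Phi (l * z) = 3 / 2 := by
  rw [I_even l (by decide), M4]

lemma I6_val (l : ℝ) : ∫ z : ℝ, z ^ 6 * phi z * Phi (l * z) = 15 / 2 := by
  rw [I_even l (by decide), M6]

lemma I1_val (l : ℝ) : ∫ z : ℝ, z ^ 1 * phi z * Phi (l * z) = bconst * del l / 2 := by
  rw [I1_eq, J0_eq, del]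
  have h4 : Real.sqrt (1 + l ^ 2) > 0 := Real.sqrt_pos.2 (by positivity)
  field_simp

lemma I3_val (l : ℝ) :
    ∫ z : ℝ, z ^ 3 * phi z * Phi (l * z)
      = bconst * del l * (3 + 2 * l ^ 2) / (2 * (1 + l ^ 2)) := by
  have hsplit : ∫ z : ℝ, (z ^ 2 + 2) * (phi z * phi (l * z))
      = (∫ z : ℝ, z ^ 2 * (phi z * phi (l * z))) + 2 * ∫ z : ℝ, phi z * phi (l * z) := by
    rw [← integral_const_mul, ← integral_add (integrable_pow_phi_phi l 2)
      ((integrable_phi_phi l).const_mul 2)]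
    congr 1; funext z; ring
  rw [I3_eq, hsplit, J0_eq, J2_eq, del]
  have h1 : (0:ℝ) < 1 + l ^ 2 := by positivity
  have h4 : Real.sqrt (1 + l ^ 2) > 0 := Real.sqrt_pos.2 h1
  field_simp
  ring

theorem stmt_0 (a β l : ℝ) :
    ∫ z : ℝ, ((1 - a * z - β * z ^ 3) ^ 2 + 1) * phi z * Phi (l * z) = C a β l := by
  have i0 := integrable_term l 0
  have i1 := integrable_term l 1
  have i2 := integrable_term l 2
  have i3 := integrable_term l 3
  have i4 := integrable_term l 4
  have i6 := integrable_term l 6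
  have expand : (fun z : ℝ => ((1 - a * z - β * z ^ 3) ^ 2 + 1) * phi z * Phi (l * z))
      = fun z : ℝ => 2 * (z ^ 0 * phi z * Phi (l * z))
        + (-2 * a) * (z ^ 1 * phi z * Phi (l * z))
        + a ^ 2 * (z ^ 2 * phi z * Phi (l * z))
        + (-2 * β) * (z ^ 3 * phi z * Phi (l * z))
        + (2 * a * β) * (z ^ 4 * phi z * Phi (l * z))
        + β ^ 2 * (z ^ 6 * phi z * Phi (l * z)) := by
    funext z; ring
  rw [expand]
  have hA : Integrable (fun z : ℝ => 2 * (z ^ 0 * phi z * Phi (l * z))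
      + -2 * a * (z ^ 1 * phi z * Phi (l * z))) volume :=
    (i0.const_mul 2).add (i1.const_mul (-2 * a))
  have hB : Integrable (fun z : ℝ => 2 * (z ^ 0 * phi z * Phi (l * z))
      + -2 * a * (z ^ 1 * phi z * Phi (l * z))
      + a ^ 2 * (z ^ 2 * phi z * Phi (l * z))) volume := hA.add (i2.const_mul (a ^ 2))
  have hC : Integrable (fun z : ℝ => 2 * (z ^ 0 * phi z * Phi (l * z))
      + -2 * a * (z ^ 1 * phi z * Phi (l * z))
      + a ^ 2 * (z ^ 2 * phi z * Phi (l * z))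
      + -2 * β * (z ^ 3 * phi z * Phi (l * z))) volume := hB.add (i3.const_mul (-2 * β))
  have hD : Integrable (fun z : ℝ => 2 * (z ^ 0 * phi z * Phi (l * z))
      + -2 * a * (z ^ 1 * phi z * Phi (l * z))
      + a ^ 2 * (z ^ 2 * phi z * Phi (l * z))
      + -2 * β * (z ^ 3 * phi z * Phi (l * z))
      + 2 * a * β * (z ^ 4 * phi z * Phi (l * z))) volume := hC.add (i4.const_mul (2 * a * β))
  rw [integral_add hD (i6.const_mul (β ^ 2)), integral_add hC (i4.const_mul (2 * a * β)),
    integral_add hB (i3.const_mul (-2 * β)), integral_add hA (i2.const_mul (a ^ 2)),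
    integral_add (i0.const_mul 2) (i1.const_mul (-2 * a)),
    integral_const_mul, integral_const_mul, integral_const_mul, integral_const_mul,
    integral_const_mul, integral_const_mul,
    I0_val, I1_val, I2_val, I3_val, I4_val, I6_val, C]
  have h1 : (0:ℝ) < 1 + l ^ 2 := by positivity
  field_simp
  ring
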